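/- Let m ≥ 2 and f ∈ ℤ[X] monic of degree D with f(1) ≠ 0. Let u ∈ ℤ[X] with deg u ≤ D - 1 be such that f(X) ≡ Φ_D(X) + u(X) (mod m), where Φ_D(X) = X^D + ⋯ + X + 1, and suppose f has no common root with Φ_D + u. Then ∑_{f(α)=0} h(α) ≥ (D/(D+1))·log(m / L(X^{D+1} - 1 + (X-1)u(X))), where L(g) denotes the sum of absolute values of the coefficients of g (the length) and h is the absolute logarithmic Weil height. -/

import Mathlib

open NumberField IsDedekindDomain
open scoped Classical

variable {K : Type*} [Field K] [NumberField K]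

/-- `log ‖x‖_v` for a finite place `v` of the number field `K`, normalized so that
`‖x‖_v = (#(𝓞 K ⧸ v))^(- ord_v(x) / [K:ℚ])`, i.e. `‖x‖_v = |x|_v^([K_v:ℚ_v]/[K:ℚ])`. -/
noncomputable def finLog (v : HeightOneSpectrum (𝓞 K)) (x : K) : ℝ :=
  if hx : x = 0 then 0
  else
    ((Multiplicative.toAdd (WithZero.unzero ((Valuation.ne_zero_iff (v.valuation K)).mpr hx)) : ℤ) : ℝ) *
        Real.log (Nat.card ((𝓞 K) ⧸ v.asIdeal)) / (Module.finrank ℚ K)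

/-- The additive valuation `v(x) = -log ‖x‖_v` at a finite place `v` of `K`. -/
noncomputable def vlog (v : HeightOneSpectrum (𝓞 K)) (x : K) : ℝ := -finLog v x

/-- `log ‖x‖_v` for an infinite place `v` of the number field `K`, normalized so that
`‖x‖_v = |x|_v^([K_v:ℚ_v]/[K:ℚ])`, i.e. the local degree is `v.mult`. -/
noncomputable def infLog (v : NumberField.InfinitePlace K) (x : K) : ℝ :=
  (v.mult : ℝ) * Real.log (v x) / (Module.finrank ℚ K)

/-- The absolute logarithmic Weil height of an element of a number field,
`h(x) = ∑_v max (log ‖x‖_v) 0` over all places of `K`. -/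
noncomputable def height (x : K) : ℝ :=
  (∑ v : NumberField.InfinitePlace K, max (infLog v x) 0) +
    ∑' v : HeightOneSpectrum (𝓞 K), max (finLog v x) 0

/-- The length of an integer polynomial: the sum of the absolute values of its coefficients. -/
noncomputable def polyLength (g : Polynomial ℤ) : ℝ := ∑ i ∈ g.support, |(g.coeff i : ℝ)|

open Polynomial in
private lemma aeval_complex_bound (g : Polynomial ℤ) (z : ℂ) (n : ℕ) (hg : g.natDegree ≤ n) :
    ‖(aeval z g : ℂ)‖ ≤ polyLength g * max 1 ‖z‖ ^ n := by
  have hM1 : (1:ℝ) ≤ max 1 ‖z‖ := le_max_left _ _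
  have hz : ‖z‖ ≤ max 1 ‖z‖ := le_max_right _ _
  rw [aeval_eq_sum_range' (Nat.lt_succ_of_le hg)]
  calc ‖∑ i ∈ Finset.range (n+1), g.coeff i • z ^ i‖
      ≤ ∑ i ∈ Finset.range (n+1), ‖g.coeff i • z ^ i‖ := norm_sum_le _ _
    _ ≤ ∑ i ∈ Finset.range (n+1), |(g.coeff i : ℝ)| * max 1 ‖z‖ ^ n := by
        refine Finset.sum_le_sum fun i hi => ?_
        rw [zsmul_eq_mul, norm_mul, Complex.norm_intCast, norm_pow]
        have h1 : ‖z‖ ^ i ≤ max 1 ‖z‖ ^ i := pow_le_pow_left₀ (norm_nonneg z) hz i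
        have h2 : max 1 ‖z‖ ^ i ≤ max 1 ‖z‖ ^ n :=
          pow_le_pow_right₀ hM1 (Nat.lt_succ_iff.mp (Finset.mem_range.mp hi))
        have h3 : (0:ℝ) ≤ |(g.coeff i : ℝ)| := abs_nonneg _
        nlinarith
    _ = polyLength g * max 1 ‖z‖ ^ n := by
        rw [← Finset.sum_mul]
        congr 1
        unfold polyLength
        exact (Finset.sum_subset (supp_subset_range (Nat.lt_succ_of_le hg))
          (fun i _ hi => by simp [Polynomial.notMem_support_iff.mp hi])).symm

open Polynomial NumberField.InfinitePlace in
private lemma key_lemma {K : Type*} [Field K] [NumberField K] {α : K} (hint : IsIntegral ℤ α)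
    (g q : Polynomial ℤ) {n : ℕ} (hg : g.natDegree ≤ n) {m : ℕ} (hm : 1 ≤ m)
    (heq : aeval α g = (m : K) * aeval α q) (hne : aeval α g ≠ 0) :
    0 < polyLength g ∧
      Real.log m ≤ Real.log (polyLength g) +
        (n : ℝ) * ∑ w : NumberField.InfinitePlace K, max (infLog w α) 0 := by
  set d := Module.finrank ℚ K with hd
  have hd0 : 0 < d := Module.finrank_pos
  set a : 𝓞 K := ⟨α, hint⟩ with ha
  have haK : ((IsScalarTower.toAlgHom ℤ (𝓞 K) K) a : K) = α := rfl
  set c : 𝓞 K := aeval a q with hc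
  have hcK : ((c : 𝓞 K) : K) = aeval α q := by
    rw [hc, ← haK, aeval_algHom_apply]
    rfl
  have hγne : aeval α q ≠ 0 := fun h => hne (by rw [heq, h, mul_zero])
  have hcne : c ≠ 0 := fun h => hγne (by rw [← hcK, h]; simp)
  have hnormc : Algebra.norm ℤ c ≠ 0 := by
    rwa [Ne, Algebra.norm_eq_zero_iff]
  have h1le : (1:ℚ) ≤ |Algebra.norm ℚ (aeval α q : K)| := by
    rw [← hcK, ← Algebra.coe_norm_int]
    have := Int.one_le_abs hnormc
    exact_mod_cast this
  have hβn : |Algebra.norm ℚ (aeval α g)| = (m:ℚ)^d * |Algebra.norm ℚ (aeval α q)| := by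
    rw [heq, map_mul, abs_mul]
    congr 1
    have hmK : ((m:ℕ) : K) = algebraMap ℚ K ((m:ℕ) : ℚ) := by
      simp
    rw [hmK, Algebra.norm_algebraMap, abs_pow, Nat.abs_cast]
  have hmd : ((m:ℝ))^d ≤ ∏ w : InfinitePlace K, w (aeval α g) ^ mult w := by
    rw [prod_eq_abs_norm]
    have : (m:ℚ)^d ≤ |Algebra.norm ℚ (aeval α g)| := by
      rw [hβn]
      nlinarith [pow_pos (by exact_mod_cast hm : (0:ℚ) < (m:ℚ)) d]
    exact_mod_cast this
  have hβpos : ∀ w : InfinitePlace K, 0 < w (aeval α g) := fun w => pos_iff.mpr hne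
  have hlog : (d:ℝ) * Real.log m ≤ ∑ w : InfinitePlace K, (mult w : ℝ) * Real.log (w (aeval α g)) := by
    have h1 : Real.log ((m:ℝ)^d) ≤ Real.log (∏ w : InfinitePlace K, w (aeval α g) ^ mult w) :=
      Real.log_le_log (by positivity) hmd
    rw [Real.log_pow, Real.log_prod (fun w _ => (pow_ne_zero _ (hβpos w).ne'))] at h1
    simpa [Real.log_pow] using h1
  have hwb : ∀ w : InfinitePlace K, w (aeval α g) ≤ polyLength g * max 1 (w α) ^ n := by
    intro w
    have h1 : w (aeval α g) = ‖(embedding w) (aeval α g)‖ := (norm_embedding_eq w (aeval α g)).symm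
    have h2 : (embedding w) (aeval α g) = aeval ((embedding w) α) g := by
      exact (aeval_algHom_apply (embedding w).toIntAlgHom α g).symm
    rw [h1, h2, ← norm_embedding_eq w α]
    exact aeval_complex_bound g _ n hg
  obtain ⟨w0⟩ : Nonempty (InfinitePlace K) := inferInstance
  have hLpos : 0 < polyLength g := by
    by_contra hL
    push_neg at hL
    have h1 := hwb w0
    have hMn : (0:ℝ) < max 1 (w0 α) ^ n := by positivity
    nlinarith [hβpos w0]
  refine ⟨hLpos, ?_⟩
  have hlogw : ∀ w : InfinitePlace K, Real.log (w (aeval α g)) ≤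
      Real.log (polyLength g) + (n:ℝ) * Real.log (max 1 (w α)) := by
    intro w
    have hMpos : (0:ℝ) < max 1 (w α) := lt_of_lt_of_le one_pos (le_max_left _ _)
    calc Real.log (w (aeval α g)) ≤ Real.log (polyLength g * max 1 (w α) ^ n) :=
          Real.log_le_log (hβpos w) (hwb w)
      _ = _ := by rw [Real.log_mul hLpos.ne' (by positivity), Real.log_pow]
  have hmax : ∀ w : InfinitePlace K,
      (mult w : ℝ) * Real.log (max 1 (w α)) = (d:ℝ) * max (infLog w α) 0 := by
    intro w
    have hlm : Real.log (max 1 (w α)) = max (Real.log (w α)) 0 := by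
      rcases le_total (w α) 1 with h | h
      · rw [max_eq_left h, Real.log_one,
          max_eq_right (Real.log_nonpos (apply_nonneg w α) h)]
      · rw [max_eq_right h, max_eq_left (Real.log_nonneg h)]
    have hdiv : (0:ℝ) ≤ (mult w : ℝ) / (d:ℝ) := by positivity
    have h2 : max (infLog w α) 0 = ((mult w : ℝ) / d) * max (Real.log (w α)) 0 := by
      rw [mul_max_of_nonneg _ _ hdiv, mul_zero]
      unfold infLog
      congr 1
      ring
    rw [hlm, h2]
    have hdne : (d:ℝ) ≠ 0 := Nat.cast_ne_zero.mpr hd0.ne'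
    field_simp
  have hsum : ∑ w : InfinitePlace K, (mult w : ℝ) * Real.log (w (aeval α g)) ≤
      (d:ℝ) * Real.log (polyLength g) +
        (n:ℝ) * ((d:ℝ) * ∑ w : InfinitePlace K, max (infLog w α) 0) := by
    calc ∑ w : InfinitePlace K, (mult w:ℝ) * Real.log (w (aeval α g))
        ≤ ∑ w : InfinitePlace K,
            ((mult w:ℝ) * Real.log (polyLength g) + (n:ℝ) * ((d:ℝ) * max (infLog w α) 0)) := by
          refine Finset.sum_le_sum fun w _ => ?_
          have h := hlogw w
          have h2 := hmax w
          have hmw : (0:ℝ) ≤ (mult w : ℝ) := Nat.cast_nonneg _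
          nlinarith [mul_le_mul_of_nonneg_left h hmw]
      _ = _ := by
          rw [Finset.sum_add_distrib, ← Finset.sum_mul, ← Finset.mul_sum, ← Finset.mul_sum]
          congr 2
          rw [← Nat.cast_sum]
          exact_mod_cast congrArg (Nat.cast : ℕ → ℝ) (sum_mult_eq (K := K))
  have hfin := hlog.trans hsum
  have hd' : (0:ℝ) < (d:ℝ) := Nat.cast_pos.mpr hd0
  nlinarith [hfin]

open Polynomial in
theorem stmt_13 {K : Type*} [Field K] [NumberField K] (m : ℕ) (hm : 2 ≤ m)
    (f : Polynomial ℤ) (hmonic : f.Monic) (D : ℕ) (hD : f.natDegree = D) (hf1 : f.eval 1 ≠ 0)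
    (u : Polynomial ℤ) (hu : u.degree < D)
    (hcong : ∀ i, (m : ℤ) ∣ (f - ((∑ k ∈ Finset.range (D + 1), Polynomial.X ^ k) + u)).coeff i)
    (α : Fin D → K)
    (hsplit : f.map (algebraMap ℤ K) = ∏ i, (Polynomial.X - Polynomial.C (α i)))
    (hnocommon : ∀ i,
      Polynomial.aeval (α i) ((∑ k ∈ Finset.range (D + 1), Polynomial.X ^ k) + u) ≠ 0) :
    (D : ℝ) / ((D : ℝ) + 1) *
        Real.log ((m : ℝ) /
          polyLength (Polynomial.X ^ (D + 1) - 1 + (Polynomial.X - 1) * u)) ≤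
      ∑ i, height (α i) := by
  rcases Nat.eq_zero_or_pos D with rfl | hD1
  · simp
  set gpoly : Polynomial ℤ := X ^ (D + 1) - 1 + (X - 1) * u with hgpoly
  have hfac : gpoly = ((∑ k ∈ Finset.range (D+1), X^k) + u) * (X - 1) := by
    rw [hgpoly, add_mul, geom_sum_mul]
    ring
  obtain ⟨q₀, hq₀⟩ := (Polynomial.C_dvd_iff_dvd_coeff ((m:ℤ))
    (f - ((∑ k ∈ Finset.range (D + 1), X ^ k) + u))).mpr hcong
  have hpoly : gpoly = C (m:ℤ) * (-(q₀ * (X - 1))) + f * (X - 1) := by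
    rw [hfac]
    have h : (∑ k ∈ Finset.range (D+1), X^k) + u = f - C (m:ℤ) * q₀ := by
      rw [← hq₀]; ring
    rw [h]; ring
  have hroot : ∀ i, aeval (α i) f = 0 := by
    intro i
    rw [aeval_def, ← eval_map, hsplit, eval_prod]
    exact Finset.prod_eq_zero (Finset.mem_univ i) (by simp)
  have hintal : ∀ i, IsIntegral ℤ (α i) :=
    fun i => ⟨f, hmonic, by rw [← aeval_def]; exact hroot i⟩
  have hne1 : ∀ i, α i ≠ 1 := by
    intro i h
    apply hf1
    have h2 : (f.map (algebraMap ℤ K)).eval 1 = 0 := by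
      rw [hsplit, eval_prod]
      exact Finset.prod_eq_zero (Finset.mem_univ i) (by simp [h])
    rw [Polynomial.eval_one_map] at h2
    have h3 : ((f.eval 1 : ℤ) : K) = 0 := by
      rw [← h2]; simp [algebraMap_int_eq]
    exact_mod_cast h3
  have heqi : ∀ i, aeval (α i) gpoly = (m:K) * aeval (α i) (-(q₀ * (X-1))) := by
    intro i
    rw [hpoly, map_add, map_mul, map_mul, hroot i, zero_mul, add_zero, aeval_C]
    norm_num
  have hnei : ∀ i, aeval (α i) gpoly ≠ 0 := by
    intro i
    rw [hfac, map_mul]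
    refine mul_ne_zero (hnocommon i) ?_
    have : aeval (α i) (X - 1 : Polynomial ℤ) = α i - 1 := by simp
    rw [this, sub_ne_zero]
    exact hne1 i
  have hgdeg : gpoly.natDegree ≤ D + 1 := by
    have hud : ((X - 1 : Polynomial ℤ) * u).natDegree ≤ D := by
      rcases eq_or_ne u 0 with h | h
      · simp [h]
      · have hX1 : (X - 1 : Polynomial ℤ).natDegree ≤ 1 := by
          refine (natDegree_sub_le _ _).trans ?_
          simp
        have huD : u.natDegree < D := by
          rw [Polynomial.natDegree_lt_iff_degree_lt h]
          exact_mod_cast hu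
        exact (natDegree_mul_le).trans (by omega)
    rw [hgpoly]
    refine (natDegree_add_le _ _).trans (max_le ?_ (hud.trans (Nat.le_succ D)))
    refine (natDegree_sub_le _ _).trans ?_
    simp
  have hm1 : 1 ≤ m := le_trans (by norm_num) hm
  have hkey : ∀ i, 0 < polyLength gpoly ∧
      Real.log m ≤ Real.log (polyLength gpoly) +
        ((D+1 : ℕ) : ℝ) * ∑ w : NumberField.InfinitePlace K, max (infLog w (α i)) 0 :=
    fun i => key_lemma (hintal i) gpoly (-(q₀ * (X-1))) hgdeg hm1 (heqi i) (hnei i)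
  have hLpos : 0 < polyLength gpoly := (hkey ⟨0, hD1⟩).1
  have hS : ∀ i, ∑ w : NumberField.InfinitePlace K, max (infLog w (α i)) 0 ≤ height (α i) := by
    intro i
    unfold height
    exact le_add_of_nonneg_right (tsum_nonneg fun v => le_max_right _ _)
  have hhnn : ∀ i, (0:ℝ) ≤ height (α i) := by
    intro i
    refine le_trans ?_ (hS i)
    exact Finset.sum_nonneg fun w _ => le_max_right _ _
  have hper : ∀ i, Real.log m - Real.log (polyLength gpoly) ≤ ((D:ℝ)+1) * height (α i) := by
    intro i
    have h1 := (hkey i).2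
    have h2 : ((D:ℝ)+1) * (∑ w : NumberField.InfinitePlace K, max (infLog w (α i)) 0)
        ≤ ((D:ℝ)+1) * height (α i) :=
      mul_le_mul_of_nonneg_left (hS i) (by positivity)
    push_cast at h1
    linarith
  have hsum : (D:ℝ) * (Real.log m - Real.log (polyLength gpoly)) ≤
      ((D:ℝ)+1) * ∑ i, height (α i) := by
    calc (D:ℝ) * (Real.log m - Real.log (polyLength gpoly))
        = ∑ _i : Fin D, (Real.log m - Real.log (polyLength gpoly)) := by
          rw [Finset.sum_const, Finset.card_univ, Fintype.card_fin, nsmul_eq_mul]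
      _ ≤ ∑ i, ((D:ℝ)+1) * height (α i) := Finset.sum_le_sum fun i _ => hper i
      _ = ((D:ℝ)+1) * ∑ i, height (α i) := (Finset.mul_sum _ _ _).symm
  have hm' : (0:ℝ) < m := by positivity
  have hmne : (m:ℝ) ≠ 0 := hm'.ne'
  rw [Real.log_div hmne hLpos.ne', div_mul_eq_mul_div,
    div_le_iff₀ (by positivity : (0:ℝ) < (D:ℝ)+1)]
  calc (D:ℝ) * (Real.log m - Real.log (polyLength gpoly)) ≤
        ((D:ℝ)+1) * ∑ i, height (α i) := hsum
    _ = (∑ i, height (α i)) * ((D:ℝ)+1) := mul_comm _ _
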